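/- Consider a declared welfare maximizer mechanism whose bid space 𝓑 satisfies Add ⊆ 𝓑 ⊆ XOS (it contains all additive valuations and consists of XOS valuations). Then for every γ ≥ 0, every profile v = (v_1, …, v_n) of XOS valuations, and every pure Nash equilibrium b for v in which each bid b_i has exposure factor γ, it holds that (6 + 4γ) · ∑_i v_i(X_i(b)) ≥ OPT(v). In other words, with this restricted bidding language, PoA_γ ≤ 6 + 4γ. -/

import Mathlib

open Finset

/-- A valuation on `m` items: normalized at `∅`, monotone, nonnegative. -/
def IsValuation {m : ℕ} (v : Finset (Fin m) → ℝ) : Prop :=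
  v ∅ = 0 ∧ (∀ S T : Finset (Fin m), S ⊆ T → v S ≤ v T) ∧ (∀ S, 0 ≤ v S)

/-- `S` is in the demand set of valuation `v` at prices `p`. -/
def InDemand {m : ℕ} (v : Finset (Fin m) → ℝ) (p : Fin m → ℝ) (S : Finset (Fin m)) : Prop :=
  ∀ T : Finset (Fin m), v T - ∑ j ∈ T, p j ≤ v S - ∑ j ∈ S, p j

/-- Gross substitutes valuations. -/
def IsGS {m : ℕ} (v : Finset (Fin m) → ℝ) : Prop :=
  IsValuation v ∧
    ∀ p q : Fin m → ℝ, (∀ j, p j ≤ q j) →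
      ∀ S : Finset (Fin m), InDemand v p S →
        ∃ T : Finset (Fin m), InDemand v q T ∧ ∀ j ∈ S, p j = q j → j ∈ T

/-- Additive valuations. -/
def IsAdditive {m : ℕ} (v : Finset (Fin m) → ℝ) : Prop :=
  ∃ w : Fin m → ℝ, (∀ j, 0 ≤ w j) ∧ ∀ S : Finset (Fin m), v S = ∑ j ∈ S, w j

/-- XOS valuations: a max over a nonempty finite family of nonnegative additive valuations. -/
def IsXOS {m : ℕ} (v : Finset (Fin m) → ℝ) : Prop :=
  ∃ (k : ℕ) (w : Fin (k + 1) → Fin m → ℝ),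
    (∀ i j, 0 ≤ w i j) ∧
    ∀ S : Finset (Fin m),
      v S = Finset.univ.sup' Finset.univ_nonempty (fun i => ∑ j ∈ S, w i j)

def GSvals (m : ℕ) : Set (Finset (Fin m) → ℝ) := {u | IsGS u}
def XOSvals (m : ℕ) : Set (Finset (Fin m) → ℝ) := {u | IsXOS u}

/-- The welfare `W^b(S)`: the maximum of `∑ i, b i (X i)` over allocations (pairwise disjoint
tuples of subsets) contained in `S`. -/
noncomputable def W {n m : ℕ} (b : Fin n → Finset (Fin m) → ℝ) (S : Finset (Fin m)) : ℝ :=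
  sSup {t : ℝ | ∃ X : Fin n → Finset (Fin m),
    (∀ i j : Fin n, i ≠ j → Disjoint (X i) (X j)) ∧ (∀ i, X i ⊆ S) ∧ t = ∑ i, b i (X i)}

/-- The welfare `W^{b₋ᵢ}(S)` with agent `i` omitted. -/
noncomputable def Wminus {n m : ℕ} (b : Fin n → Finset (Fin m) → ℝ) (i : Fin n)
    (S : Finset (Fin m)) : ℝ :=
  sSup {t : ℝ | ∃ X : Fin n → Finset (Fin m),
    (∀ k l : Fin n, k ≠ l → Disjoint (X k) (X l)) ∧ (∀ k, X k ⊆ S) ∧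
    t = ∑ k ∈ Finset.univ.erase i, b k (X k)}

/-- The welfare `W^b(x)` for a multiplicity vector `x : Fin m → ℕ`: maximum of `∑ i, b i (X i)`
over tuples of sets in which each item `j` is used at most `x j` times. -/
noncomputable def Wmult {n m : ℕ} (b : Fin n → Finset (Fin m) → ℝ) (x : Fin m → ℕ) : ℝ :=
  sSup {t : ℝ | ∃ X : Fin n → Finset (Fin m),
    (∀ j : Fin m, (Finset.univ.filter fun i => j ∈ X i).card ≤ x j) ∧ t = ∑ i, b i (X i)}

/-- The optimal welfare for the true valuations. -/
noncomputable def OPT {n m : ℕ} (v : Fin n → Finset (Fin m) → ℝ) : ℝ := W v Finset.univ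

/-- A mechanism: allocation and payment maps on bid profiles. -/
structure Mechanism (n m : ℕ) where
  alloc : (Fin n → Finset (Fin m) → ℝ) → Fin n → Finset (Fin m)
  pay : (Fin n → Finset (Fin m) → ℝ) → Fin n → ℝ

/-- A bid profile lies in the bid space `B`. -/
def InBidSpace {n m : ℕ} (B : Set (Finset (Fin m) → ℝ))
    (b : Fin n → Finset (Fin m) → ℝ) : Prop :=
  ∀ i, b i ∈ B

/-- On bid profiles from `B`, the allocation is pairwise disjoint. -/
def AllocDisjoint {n m : ℕ} (M : Mechanism n m) (B : Set (Finset (Fin m) → ℝ)) : Prop :=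
  ∀ b, InBidSpace B b → ∀ i j : Fin n, i ≠ j → Disjoint (M.alloc b i) (M.alloc b j)

/-- On bid profiles from `B`, payments are nonnegative. -/
def PayNonneg {n m : ℕ} (M : Mechanism n m) (B : Set (Finset (Fin m) → ℝ)) : Prop :=
  ∀ b, InBidSpace B b → ∀ i, 0 ≤ M.pay b i

/-- The utility of agent `i` with true valuation `v` under bid profile `b`. -/
noncomputable def util {n m : ℕ} (M : Mechanism n m) (v : Finset (Fin m) → ℝ) (i : Fin n)
    (b : Fin n → Finset (Fin m) → ℝ) : ℝ :=
  v (M.alloc b i) - M.pay b i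

/-- Declared welfare maximizer. -/
def IsDWM {n m : ℕ} (M : Mechanism n m) (B : Set (Finset (Fin m) → ℝ)) : Prop :=
  (∀ b, InBidSpace B b → ∑ i, b i (M.alloc b i) = W b Finset.univ) ∧
  (∀ b, InBidSpace B b → ∀ i, M.pay b i ≤ b i (M.alloc b i)) ∧
  (∀ b, InBidSpace B b → ∀ i : Fin n, ∃ b' : Fin n → Finset (Fin m) → ℝ,
    InBidSpace B b' ∧ b' i = b i ∧ M.alloc b' i = M.alloc b i ∧
    M.pay b' i = b i (M.alloc b i))

/-- English Walrasian mechanism: welfare-maximizing allocation w.r.t. the bids, with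
payments given by the minimum Walrasian prices `W^b(𝟙 + e_j) − W^b(𝟙)`. -/
def IsEnglish {n m : ℕ} (M : Mechanism n m) (B : Set (Finset (Fin m) → ℝ)) : Prop :=
  (∀ b, InBidSpace B b → ∑ i, b i (M.alloc b i) = W b Finset.univ) ∧
  (∀ b, InBidSpace B b → ∀ i, M.pay b i =
    ∑ j ∈ M.alloc b i,
      (Wmult b (fun k => if k = j then 2 else 1) - Wmult b (fun _ => 1)))

/-- VCG mechanism: welfare-maximizing allocation w.r.t. the bids, with externality payments. -/
def IsVCG {n m : ℕ} (M : Mechanism n m) (B : Set (Finset (Fin m) → ℝ)) : Prop :=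
  (∀ b, InBidSpace B b → ∑ i, b i (M.alloc b i) = W b Finset.univ) ∧
  (∀ b, InBidSpace B b → ∀ i, M.pay b i =
    Wminus b i Finset.univ - Wminus b i (Finset.univ \ M.alloc b i))

/-- Bid `bi` of agent `i` with true valuation `v` has exposure factor `γ`. -/
def HasExposureFactor {n m : ℕ} (M : Mechanism n m) (B : Set (Finset (Fin m) → ℝ))
    (v : Finset (Fin m) → ℝ) (i : Fin n) (bi : Finset (Fin m) → ℝ) (γ : ℝ) : Prop :=
  ∀ b : Fin n → Finset (Fin m) → ℝ, InBidSpace B b → b i = bi →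
    M.pay b i ≤ (1 + γ) * v (M.alloc b i)

/-- `b` is a pure Nash equilibrium for true valuations `v`. -/
noncomputable def IsNash {n m : ℕ} (M : Mechanism n m) (B : Set (Finset (Fin m) → ℝ))
    (v b : Fin n → Finset (Fin m) → ℝ) : Prop :=
  InBidSpace B b ∧
  ∀ i : Fin n, ∀ bi' ∈ B, util M (v i) i (Function.update b i bi') ≤ util M (v i) i b

/-- A finitely supported probability distribution. -/
structure FinDist (α : Type*) where
  supp : Finset α
  μ : α → ℝ
  nonneg : ∀ a, 0 ≤ μ a
  sum_one : ∑ a ∈ supp, μ a = 1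

/-- Expectation of `f` under a finitely supported distribution. -/
noncomputable def FinDist.exp {α : Type*} (D : FinDist α) (f : α → ℝ) : ℝ :=
  ∑ a ∈ D.supp, D.μ a * f a

/-- Bayes-Nash equilibrium: strategies map types in `V` to bids in `B`, and no unilateral
deviation (depending only on the agent's own type) improves expected utility. -/
noncomputable def IsBNE {n m : ℕ} (M : Mechanism n m) (V B : Set (Finset (Fin m) → ℝ))
    (D : FinDist (Fin n → Finset (Fin m) → ℝ))
    (s : Fin n → (Finset (Fin m) → ℝ) → Finset (Fin m) → ℝ) : Prop :=
  (∀ i : Fin n, ∀ vi ∈ V, s i vi ∈ B) ∧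
  ∀ i : Fin n, ∀ s' : (Finset (Fin m) → ℝ) → Finset (Fin m) → ℝ, (∀ vi ∈ V, s' vi ∈ B) →
    D.exp (fun v => util M (v i) i (Function.update (fun k => s k (v k)) i (s' (v i)))) ≤
    D.exp (fun v => util M (v i) i (fun k => s k (v k)))

/-- Strategy `si` of agent `i` has exposure factor `γ` under distribution `D`. -/
noncomputable def BayesExposure {n m : ℕ} (M : Mechanism n m)
    (V B : Set (Finset (Fin m) → ℝ)) (D : FinDist (Fin n → Finset (Fin m) → ℝ)) (i : Fin n)
    (si : (Finset (Fin m) → ℝ) → Finset (Fin m) → ℝ) (γ : ℝ) : Prop :=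
  ∀ c : (Finset (Fin m) → ℝ) → Fin n → Finset (Fin m) → ℝ,
    (∀ vi ∈ V, InBidSpace B (c vi) ∧ c vi i = si vi) →
    D.exp (fun v => M.pay (c (v i)) i) ≤
      (1 + γ) * D.exp (fun v => (v i) (M.alloc (c (v i)) i))

lemma xos_nonneg {m : ℕ} {v : Finset (Fin m) → ℝ} (h : IsXOS v) : ∀ S, 0 ≤ v S := by
  obtain ⟨k, w, hw0, hw⟩ := h
  intro S
  rw [hw]
  exact le_trans (Finset.sum_nonneg fun j _ => hw0 0 j)
    (Finset.le_sup' (fun i => ∑ j ∈ S, w i j) (Finset.mem_univ (0 : Fin (k+1))))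

lemma xos_mono {m : ℕ} {v : Finset (Fin m) → ℝ} (h : IsXOS v) :
    ∀ S T : Finset (Fin m), S ⊆ T → v S ≤ v T := by
  obtain ⟨k, w, hw0, hw⟩ := h
  intro S T hST
  rw [hw, hw]
  refine Finset.sup'_le _ _ fun i _ =>
    le_trans ?_ (Finset.le_sup' (fun i => ∑ j ∈ T, w i j) (Finset.mem_univ i))
  exact Finset.sum_le_sum_of_subset_of_nonneg hST fun j _ _ => hw0 i j

lemma xos_support {m : ℕ} {v : Finset (Fin m) → ℝ} (h : IsXOS v) (S : Finset (Fin m)) :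
    ∃ q : Fin m → ℝ, (∀ j, 0 ≤ q j) ∧ (∀ T, T ⊆ S → ∑ j ∈ T, q j ≤ v T) ∧
      ∑ j ∈ S, q j = v S := by
  obtain ⟨k, w, hw0, hw⟩ := h
  obtain ⟨i, -, hi⟩ := Finset.exists_mem_eq_sup' Finset.univ_nonempty
    (fun i : Fin (k + 1) => ∑ j ∈ S, w i j)
  refine ⟨w i, hw0 i, fun T _ => ?_, by rw [hw, ← hi]⟩
  rw [hw]
  exact Finset.le_sup' (fun i => ∑ j ∈ T, w i j) (Finset.mem_univ i)

lemma W_bddAbove {n m : ℕ} (b : Fin n → Finset (Fin m) → ℝ) (S : Finset (Fin m)) :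
    BddAbove {t : ℝ | ∃ X : Fin n → Finset (Fin m),
      (∀ i j : Fin n, i ≠ j → Disjoint (X i) (X j)) ∧ (∀ i, X i ⊆ S) ∧
      t = ∑ i, b i (X i)} := by
  apply Set.Finite.bddAbove
  apply Set.Finite.subset
    (Set.finite_range (fun X : Fin n → Finset (Fin m) => ∑ i, b i (X i)))
  rintro t ⟨X, -, -, rfl⟩
  exact ⟨X, rfl⟩

lemma le_W {n m : ℕ} (b : Fin n → Finset (Fin m) → ℝ) (S : Finset (Fin m))
    (X : Fin n → Finset (Fin m)) (hdisj : ∀ i j : Fin n, i ≠ j → Disjoint (X i) (X j))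
    (hsub : ∀ i, X i ⊆ S) : ∑ i, b i (X i) ≤ W b S :=
  le_csSup (W_bddAbove b S) ⟨X, hdisj, hsub, rfl⟩

/-- STATEMENT 6
: restricted bidding languages, Add ⊆ 𝓑 ⊆ XOS: for XOS true valuations,
PoA_γ ≤ 6 + 4γ for declared welfare maximizers. -/
theorem stmt6 {n m : ℕ} (B : Set (Finset (Fin m) → ℝ))
    (hAdd : ∀ u : Finset (Fin m) → ℝ, IsAdditive u → u ∈ B)
    (hXOS : ∀ u ∈ B, IsXOS u)
    (M : Mechanism n m)
    (hM : AllocDisjoint M B) (hpay : PayNonneg M B) (hDWM : IsDWM M B)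
    (γ : ℝ) (hγ : 0 ≤ γ)
    (v : Fin n → Finset (Fin m) → ℝ) (hv : ∀ i, IsXOS (v i))
    (b : Fin n → Finset (Fin m) → ℝ) (hNash : IsNash M B v b)
    (hexp : ∀ i : Fin n, HasExposureFactor M B (v i) i (b i) γ) :
    OPT v ≤ (6 + 4 * γ) * ∑ i, v i (M.alloc b i) := by
  classical
  obtain ⟨hb, hnash⟩ := hNash
  have hvmono : ∀ i (S T : Finset (Fin m)), S ⊆ T → v i S ≤ v i T :=
    fun i => xos_mono (hv i)
  have hvpos : ∀ i S, 0 ≤ v i S := fun i => xos_nonneg (hv i)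
  have hbpos : ∀ k S, 0 ≤ b k S := fun k => xos_nonneg (hXOS _ (hb k))
  set Xb : Fin n → Finset (Fin m) := M.alloc b with hXbdef
  set SW : ℝ := ∑ i, v i (Xb i) with hSWdef
  set D : ℝ := ∑ i, b i (Xb i) with hDdef
  have hSW0 : 0 ≤ SW := Finset.sum_nonneg fun i _ => hvpos i _
  -- threshold + exposure: bids at equilibrium are at most (1+γ) times true values
  have hstar : ∀ i, b i (Xb i) ≤ (1 + γ) * v i (Xb i) := by
    intro i
    obtain ⟨b2, hb2B, hb2i, hb2alloc, hb2pay⟩ := hDWM.2.2 b hb i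
    have h := hexp i b2 hb2B hb2i
    rw [hb2pay, hb2alloc] at h
    exact h
  have hDle : D ≤ (1 + γ) * SW := by
    rw [hDdef, hSWdef, Finset.mul_sum]
    exact Finset.sum_le_sum fun i _ => hstar i
  have hDW : D = W b Finset.univ := by
    have h := hDWM.1 b hb
    rw [← hXbdef, ← hDdef] at h
    exact h
  -- supporting price vectors of the bids at the equilibrium allocation
  have hρex : ∀ k, ∃ q : Fin m → ℝ, (∀ j, 0 ≤ q j) ∧
      (∀ T, T ⊆ Xb k → ∑ j ∈ T, q j ≤ b k T) ∧ ∑ j ∈ Xb k, q j = b k (Xb k) :=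
    fun k => xos_support (hXOS _ (hb k)) (Xb k)
  choose ρ hρ0 hρle hρeq using hρex
  rw [OPT, W]
  refine csSup_le ⟨∑ i, v i ∅, fun _ => ∅, fun _ _ _ => Finset.disjoint_empty_left _,
    fun _ => Finset.empty_subset _, rfl⟩ ?_
  rintro t ⟨O, hOdisj, -, rfl⟩
  -- per-agent smoothness inequality
  have key : ∀ i, v i (O i) / 2 ≤
      v i (Xb i) + b i (Xb i) + ∑ k, ∑ j ∈ Xb k ∩ O i, ρ k j := by
    intro i
    obtain ⟨q, hq0, hqle, hqeq⟩ := xos_support (hv i) (O i)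
    set w' : Fin m → ℝ := fun j => if j ∈ O i then q j / 2 else 0 with hw'def
    have hw'0 : ∀ j, 0 ≤ w' j := by
      intro j
      rw [hw'def]
      dsimp only
      split
      · exact div_nonneg (hq0 j) (by norm_num)
      · exact le_refl 0
    set b' : Finset (Fin m) → ℝ := fun S => ∑ j ∈ S, w' j with hb'def
    have hb'B : b' ∈ B := hAdd b' ⟨w', hw'0, fun S => rfl⟩
    set c : Fin n → Finset (Fin m) → ℝ := Function.update b i b' with hcdef
    have hc : InBidSpace B c := by
      intro k
      rcases eq_or_ne k i with rfl | hk
      · rw [hcdef, Function.update_self]; exact hb'B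
      · rw [hcdef, Function.update_of_ne hk]; exact hb k
    have hci : c i = b' := by rw [hcdef]; exact Function.update_self i b' b
    have hck : ∀ k, k ≠ i → c k = b k := by
      intro k hk
      rw [hcdef]
      exact Function.update_of_ne hk b' b
    -- utility from deviating
    have hb'Oi : b' (O i) = v i (O i) / 2 := by
      rw [hb'def]
      dsimp only
      rw [← hqeq, Finset.sum_div]
      apply Finset.sum_congr rfl
      intro j hj
      rw [hw'def]
      exact if_pos hj
    have h2b' : 2 * b' (M.alloc c i) ≤ v i (M.alloc c i) := by
      have h1 : 2 * b' (M.alloc c i) = ∑ j ∈ M.alloc c i ∩ O i, q j := by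
        rw [hb'def]
        dsimp only
        rw [Finset.mul_sum, ← Finset.sum_ite_mem (M.alloc c i) (O i) q]
        apply Finset.sum_congr rfl
        intro j _
        rw [hw'def]
        dsimp only
        split
        · ring
        · ring
      rw [h1]
      exact le_trans (hqle _ Finset.inter_subset_right)
        (hvmono i _ _ Finset.inter_subset_left)
    have hb'Yi_le : b' (M.alloc c i) ≤ v i (Xb i) := by
      have hna : util M (v i) i (Function.update b i b') ≤ util M (v i) i b :=
        hnash i b' hb'B
      rw [← hcdef] at hna
      have hpc : M.pay c i ≤ b' (M.alloc c i) := by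
        have h := hDWM.2.1 c hc i
        rwa [hci] at h
      have hpb : 0 ≤ M.pay b i := hpay b hb i
      have huc : util M (v i) i c = v i (M.alloc c i) - M.pay c i := rfl
      have hub : util M (v i) i b = v i (Xb i) - M.pay b i := rfl
      rw [huc, hub] at hna
      linarith
    -- welfare maximization against the hybrid allocation Z
    set Z : Fin n → Finset (Fin m) := fun k => if k = i then O i else Xb k \ O i
      with hZdef
    have hZdisj : ∀ k l, k ≠ l → Disjoint (Z k) (Z l) := by
      intro k l hkl
      rw [hZdef]
      dsimp only
      rcases eq_or_ne k i with rfl | hk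
      · rw [if_pos rfl, if_neg (Ne.symm hkl)]
        exact Finset.disjoint_sdiff
      · rcases eq_or_ne l i with rfl | hl
        · rw [if_neg hk, if_pos rfl]
          exact Finset.sdiff_disjoint
        · rw [if_neg hk, if_neg hl]
          exact (hM b hb k l hkl).mono Finset.sdiff_subset Finset.sdiff_subset
    have hWc : ∑ k, c k (M.alloc c k) = W c Finset.univ := hDWM.1 c hc
    have hZle : ∑ k, c k (Z k) ≤ W c Finset.univ :=
      le_W c Finset.univ Z hZdisj fun _ => Finset.subset_univ _
    have hsum_c : ∑ k, c k (M.alloc c k) =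
        b' (M.alloc c i) + ∑ k ∈ Finset.univ.erase i, b k (M.alloc c k) := by
      rw [← Finset.add_sum_erase Finset.univ (fun k => c k (M.alloc c k))
        (Finset.mem_univ i)]
      congr 1
      · rw [hci]
      · apply Finset.sum_congr rfl
        intro k hk
        rw [hck k (Finset.ne_of_mem_erase hk)]
    have hsum_z : ∑ k, c k (Z k) =
        b' (O i) + ∑ k ∈ Finset.univ.erase i, b k (Xb k \ O i) := by
      rw [← Finset.add_sum_erase Finset.univ (fun k => c k (Z k)) (Finset.mem_univ i)]
      congr 1
      · rw [hci, hZdef]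
        dsimp only
        rw [if_pos rfl]
      · apply Finset.sum_congr rfl
        intro k hk
        have hk' := Finset.ne_of_mem_erase hk
        rw [hck k hk', hZdef]
        dsimp only
        rw [if_neg hk']
    have hYerase_le : ∑ k ∈ Finset.univ.erase i, b k (M.alloc c k) ≤ D := by
      have h1 : ∑ k ∈ Finset.univ.erase i, b k (M.alloc c k) ≤
          ∑ k, b k (M.alloc c k) := by
        rw [← Finset.add_sum_erase Finset.univ (fun k => b k (M.alloc c k))
          (Finset.mem_univ i)]
        exact le_add_of_nonneg_left (hbpos i _)
      have h2 : ∑ k, b k (M.alloc c k) ≤ W b Finset.univ :=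
        le_W b Finset.univ (M.alloc c) (hM c hc) fun _ => Finset.subset_univ _
      rw [← hDW] at h2
      linarith
    have he : ∀ k, b k (Xb k) - ∑ j ∈ Xb k ∩ O i, ρ k j ≤ b k (Xb k \ O i) := by
      intro k
      have h1 : ∑ j ∈ Xb k \ O i, ρ k j ≤ b k (Xb k \ O i) :=
        hρle k _ Finset.sdiff_subset
      have h2 : ∑ j ∈ Xb k ∩ O i, ρ k j + ∑ j ∈ Xb k \ O i, ρ k j =
          ∑ j ∈ Xb k, ρ k j := Finset.sum_inter_add_sum_sdiff _ _ _
      have h3 := hρeq k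
      linarith
    have hAe : D - b i (Xb i) - ∑ k, ∑ j ∈ Xb k ∩ O i, ρ k j ≤
        ∑ k ∈ Finset.univ.erase i, b k (Xb k \ O i) := by
      have h1 : ∑ k ∈ Finset.univ.erase i,
          (b k (Xb k) - ∑ j ∈ Xb k ∩ O i, ρ k j) ≤
          ∑ k ∈ Finset.univ.erase i, b k (Xb k \ O i) :=
        Finset.sum_le_sum fun k _ => he k
      rw [Finset.sum_sub_distrib] at h1
      have h2 := Finset.add_sum_erase Finset.univ (fun k => b k (Xb k))
        (Finset.mem_univ i)
      rw [← hDdef] at h2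
      have h3 := Finset.add_sum_erase Finset.univ
        (fun k => ∑ j ∈ Xb k ∩ O i, ρ k j) (Finset.mem_univ i)
      have h4 : 0 ≤ ∑ j ∈ Xb i ∩ O i, ρ i j :=
        Finset.sum_nonneg fun j _ => hρ0 i j
      linarith
    -- combine
    rw [← hb'Oi]
    linarith [hZle, hWc, hsum_c, hsum_z, hb'Yi_le, hYerase_le, hAe]
  -- sum the per-agent inequalities
  have hsum : (∑ i, v i (O i)) / 2 ≤
      SW + D + ∑ i, ∑ k, ∑ j ∈ Xb k ∩ O i, ρ k j := by
    rw [Finset.sum_div]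
    calc ∑ i, v i (O i) / 2
        ≤ ∑ i, (v i (Xb i) + b i (Xb i) + ∑ k, ∑ j ∈ Xb k ∩ O i, ρ k j) :=
          Finset.sum_le_sum fun i _ => key i
      _ = SW + D + ∑ i, ∑ k, ∑ j ∈ Xb k ∩ O i, ρ k j := by
          rw [Finset.sum_add_distrib, Finset.sum_add_distrib, hSWdef, hDdef]
  have hEtot : ∑ i, ∑ k, ∑ j ∈ Xb k ∩ O i, ρ k j ≤ D := by
    rw [Finset.sum_comm, hDdef]
    apply Finset.sum_le_sum
    intro k _
    have hdisj : (↑(Finset.univ : Finset (Fin n)) : Set (Fin n)).PairwiseDisjoint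
        (fun i => Xb k ∩ O i) := fun x _ y _ hxy =>
      (hOdisj x y hxy).mono Finset.inter_subset_right Finset.inter_subset_right
    calc ∑ i, ∑ j ∈ Xb k ∩ O i, ρ k j
        = ∑ j ∈ Finset.univ.biUnion (fun i => Xb k ∩ O i), ρ k j :=
          (Finset.sum_biUnion hdisj).symm
      _ ≤ ∑ j ∈ Xb k, ρ k j :=
          Finset.sum_le_sum_of_subset_of_nonneg
            (Finset.biUnion_subset.2 fun i _ => Finset.inter_subset_left)
            (fun j _ _ => hρ0 k j)
      _ = b k (Xb k) := hρeq k
  have hfin : 2 * SW + 4 * ((1 + γ) * SW) = (6 + 4 * γ) * SW := by ring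
  linarith
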